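/- arXiv:2210.05382 — 2 statements merged into one kernel-verified Lean document; each statement's English description precedes it below -/
import Mathlib

section
/- The neighborhood subgraph of the vertex (0,0) in the 4×4 rook's graph is not isomorphic to the neighborhood subgraph of the vertex (0,0) in the Shrikhande graph. -/
/-- The 4×4 rook's graph on `ZMod 4 × ZMod 4`: two distinct vertices are adjacent
iff they agree in the first coordinate or agree in the second coordinate. -/
def rookGraph : SimpleGraph (ZMod 4 × ZMod 4) where
  Adj u v := u ≠ v ∧ (u.1 = v.1 ∨ u.2 = v.2)
  symm := by
    constructor
    rintro u v ⟨hne, h⟩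
    exact ⟨hne.symm, by tauto⟩
  loopless := by
    constructor
    rintro u ⟨hne, -⟩
    exact hne rfl

/-- The connection set of the Shrikhande graph. -/
def shrikhandeSet : Finset (ZMod 4 × ZMod 4) :=
  {(1, 0), (3, 0), (0, 1), (0, 3), (1, 1), (3, 3)}

/-- The Shrikhande graph on `ZMod 4 × ZMod 4`: `u` and `v` are adjacent iff
`u - v` lies in the set {(1,0),(3,0),(0,1),(0,3),(1,1),(3,3)}. -/
def shrikhandeGraph : SimpleGraph (ZMod 4 × ZMod 4) where
  Adj u v := u - v ∈ shrikhandeSet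
  symm := by
    constructor
    intro u v h
    have key : ∀ w : ZMod 4 × ZMod 4, w ∈ shrikhandeSet → -w ∈ shrikhandeSet := by decide
    have := key _ h
    rwa [neg_sub] at this
  loopless := by
    constructor
    intro u h
    rw [sub_self] at h
    revert h
    decide

lemma shrik_nbr_mem : ∀ x : ZMod 4 × ZMod 4,
    (0, 0) - x ∈ shrikhandeSet → x ∈ shrikhandeSet := by decide

lemma shrik_no_triangle : ∀ x ∈ shrikhandeSet, ∀ y ∈ shrikhandeSet, ∀ z ∈ shrikhandeSet,
    x - y ∈ shrikhandeSet → y - z ∈ shrikhandeSet → x - z ∉ shrikhandeSet := by decide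

/-- The neighborhood subgraph of (0,0) in the 4×4 rook's graph is not isomorphic to
the neighborhood subgraph of (0,0) in the Shrikhande graph. -/
theorem rookGraph_neighborhood_not_iso_shrikhandeGraph_neighborhood :
    ¬ Nonempty ((rookGraph.induce (rookGraph.neighborSet (0, 0))) ≃g
      (shrikhandeGraph.induce (shrikhandeGraph.neighborSet (0, 0)))) := by
  rintro ⟨f⟩
  have ha : (((0 : ZMod 4), (1 : ZMod 4))) ∈ rookGraph.neighborSet (0, 0) :=
    ⟨by decide, Or.inl rfl⟩
  have hb : (((0 : ZMod 4), (2 : ZMod 4))) ∈ rookGraph.neighborSet (0, 0) :=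
    ⟨by decide, Or.inl rfl⟩
  have hc : (((0 : ZMod 4), (3 : ZMod 4))) ∈ rookGraph.neighborSet (0, 0) :=
    ⟨by decide, Or.inl rfl⟩
  set a : (rookGraph.neighborSet (0, 0)) := ⟨_, ha⟩
  set b : (rookGraph.neighborSet (0, 0)) := ⟨_, hb⟩
  set c : (rookGraph.neighborSet (0, 0)) := ⟨_, hc⟩
  have hab : (rookGraph.induce (rookGraph.neighborSet (0, 0))).Adj a b :=
    show rookGraph.Adj (0, 1) (0, 2) from ⟨by decide, Or.inl rfl⟩
  have hbc : (rookGraph.induce (rookGraph.neighborSet (0, 0))).Adj b c :=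
    show rookGraph.Adj (0, 2) (0, 3) from ⟨by decide, Or.inl rfl⟩
  have hac : (rookGraph.induce (rookGraph.neighborSet (0, 0))).Adj a c :=
    show rookGraph.Adj (0, 1) (0, 3) from ⟨by decide, Or.inl rfl⟩
  have h1 : ((f a : (shrikhandeGraph.neighborSet (0, 0))) : ZMod 4 × ZMod 4) -
      ((f b : _) : ZMod 4 × ZMod 4) ∈ shrikhandeSet := f.map_adj_iff.mpr hab
  have h2 : ((f b : _) : ZMod 4 × ZMod 4) - ((f c : _) : ZMod 4 × ZMod 4) ∈ shrikhandeSet :=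
    f.map_adj_iff.mpr hbc
  have h3 : ((f a : _) : ZMod 4 × ZMod 4) - ((f c : _) : ZMod 4 × ZMod 4) ∈ shrikhandeSet :=
    f.map_adj_iff.mpr hac
  exact shrik_no_triangle _ (shrik_nbr_mem _ (f a).2) _ (shrik_nbr_mem _ (f b).2)
    _ (shrik_nbr_mem _ (f c).2) h1 h2 h3
end

section
/- The 4×4 rook's graph is not isomorphic to the Shrikhande graph. -/
instance : DecidableRel shrikhandeGraph.Adj :=
  fun u v => (inferInstance : Decidable (u - v ∈ shrikhandeSet))

/-- The 4×4 rook's graph is not isomorphic to the Shrikhande graph. -/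
theorem rookGraph_not_iso_shrikhandeGraph : ¬ Nonempty (rookGraph ≃g shrikhandeGraph) := by
  rintro ⟨f⟩
  have key : ∀ x ∈ shrikhandeSet, ∀ y ∈ shrikhandeSet, ∀ z ∈ shrikhandeSet,
      ¬(y - x ∈ shrikhandeSet ∧ z - x ∈ shrikhandeSet ∧ z - y ∈ shrikhandeSet) := by decide
  have hadj : ∀ i j : ZMod 4, i ≠ j → rookGraph.Adj (0, i) (0, j) := by
    intro i j h
    exact ⟨fun hc => h (congrArg Prod.snd hc), Or.inl rfl⟩
  have h : ∀ i j : ZMod 4, i ≠ j → f (0, j) - f (0, i) ∈ shrikhandeSet := by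
    intro i j hij
    exact (f.map_adj_iff).2 (hadj j i hij.symm)
  refine key _ (h 0 1 (by decide)) _ (h 0 2 (by decide)) _ (h 0 3 (by decide))
    ⟨?_, ?_, ?_⟩ <;> rw [sub_sub_sub_cancel_right]
  · exact h 1 2 (by decide)
  · exact h 1 3 (by decide)
  · exact h 2 3 (by decide)
end
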